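/- arXiv:2305.18749 — 2 statements merged into one kernel-verified Lean document; each statement's English description precedes it below -/
import Mathlib

section
/- Let f ∈ Γ(X) with A ∩ dom f = ∅ and A ≠ ∅, and let x* ∈ X*. Then the following are equivalent: (iv) there exists d ∈ ⋂_{i∈I} [f_i^∞ ≤ 0] ∩ C^∞ such that f^∞(d) < ⟨x*, d⟩; (v) there exists d ∈ A^∞ such that f^∞(d) < ⟨x*, d⟩. -/
open Pointwise

noncomputable section

variable {X : Type*} [AddCommGroup X] [Module ℝ X] [TopologicalSpace X]

/-- Fenchel conjugate, as a function on the weak-* dual. -/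
def conjFn (h : X → EReal) : WeakDual ℝ X → EReal :=
  fun p => ⨆ x : X, (p x : EReal) - h x

/-- Epigraph of an extended-real-valued function. -/
def epiFn {V : Type*} (h : V → EReal) : Set (V × ℝ) :=
  {q | h q.1 ≤ (q.2 : EReal)}

/-- Graph of an extended-real-valued function (where it is finite). -/
def gphFn {V : Type*} (h : V → EReal) : Set (V × ℝ) :=
  {q | h q.1 = (q.2 : EReal)}

/-- Effective domain. -/
def domFn {V : Type*} (h : V → EReal) : Set V :=
  {x | h x < ⊤}

open Classical in
/-- Indicator function of a set. -/
def indicatorE {V : Type*} (D : Set V) : V → EReal :=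
  fun x => if x ∈ D then (0 : EReal) else ⊤

/-- Convex cone generated by `D ∪ {0}`. -/
def coneGen {V : Type*} [AddCommGroup V] [Module ℝ V] (D : Set V) : Set V :=
  {0} ∪ {y | ∃ t : ℝ, 0 ≤ t ∧ ∃ x ∈ convexHull ℝ D, y = t • x}

/-- `h ∈ Γ(X)`: proper, convex and lower semicontinuous. -/
def InGamma (h : X → EReal) : Prop :=
  (∀ x, h x ≠ ⊥) ∧ (∃ x, h x ≠ ⊤) ∧
    Convex ℝ {q : X × ℝ | h q.1 ≤ (q.2 : EReal)} ∧ LowerSemicontinuous h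

/-- Solution set `A` of the system `σ = {f i x ≤ 0, i ∈ I; x ∈ C}`. -/
def solSet {I : Type*} (C : Set X) (f : I → X → EReal) : Set X :=
  {x | x ∈ C ∧ ∀ i, f i x ≤ (0 : EReal)}

/-- Characteristic cone `K = cone (epi δ_C* ∪ ⋃ i, epi f_i*)` of the system. -/
def charCone {I : Type*} (C : Set X) (f : I → X → EReal) : Set (WeakDual ℝ X × ℝ) :=
  coneGen (epiFn (conjFn (indicatorE C)) ∪ ⋃ i, epiFn (conjFn (f i)))

/-- Barrier cone `barr C = dom δ_C*`. -/
def barCone (C : Set X) : Set (WeakDual ℝ X) :=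
  domFn (conjFn (indicatorE C))

/-- The Farkas–Minkowski constraint qualification. -/
def IsFM {I : Type*} (C : Set X) (f : I → X → EReal) : Prop :=
  (solSet C f).Nonempty ∧ IsClosed (charCone C f)

/-- Recession function `h^∞ = δ*_{dom h*}`. -/
def recFn (h : X → EReal) : X → EReal :=
  fun x => ⨆ q ∈ domFn (conjFn h), ((q x : ℝ) : EReal)

/-- Recession cone `D^∞ = ⋂_{t>0} t (D - a)`, for any `a ∈ D`. -/
def recCone (D : Set X) : Set X :=
  {d | ∀ a ∈ D, ∀ t : ℝ, 0 < t → d ∈ t • (D - ({a} : Set X))}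

/-- Subdifferential of `h` at `a`. -/
def subdiff (h : X → EReal) (a : X) : Set (WeakDual ℝ X) :=
  {p | (∃ r : ℝ, h a = (r : EReal)) ∧ ∀ x, h a + ((p (x - a) : ℝ) : EReal) ≤ h x}


section Aux

variable {X : Type*} [AddCommGroup X] [Module ℝ X] [TopologicalSpace X]

def toWD (q : X →L[ℝ] ℝ) : WeakDual ℝ X := q

omit [AddCommGroup X] [Module ℝ X] in
lemma isClosed_epiFn {h : X → EReal} (hl : LowerSemicontinuous h) :
    IsClosed (epiFn h) := by
  have h1 : IsClosed {p : X × EReal | h p.1 ≤ p.2} := hl.isClosed_epigraph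
  have h2 : Continuous (fun q : X × ℝ => ((q.1, (q.2 : EReal)) : X × EReal)) :=
    continuous_fst.prodMk (continuous_coe_real_ereal.comp continuous_snd)
  exact h1.preimage h2

omit [TopologicalSpace X] in
lemma mem_recCone_iff {D : Set X} {d : X} :
    d ∈ recCone D ↔ ∀ a ∈ D, ∀ s : ℝ, 0 < s → a + s • d ∈ D := by
  constructor
  · intro h a ha s hs
    obtain ⟨y, hy, hyd⟩ := h a ha s⁻¹ (by positivity)
    rw [Set.mem_sub] at hy
    obtain ⟨x, hx, a', ha', rfl⟩ := hy
    obtain rfl : a = a' := ha'.symm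
    have : a + s • d = x := by
      simp only at hyd
      rw [← hyd, smul_smul, mul_inv_cancel₀ hs.ne', one_smul]; abel
    rwa [this]
  · intro h a ha t ht
    refine Set.mem_smul_set.2 ⟨a + t⁻¹ • d - a,
      Set.mem_sub.2 ⟨a + t⁻¹ • d, h a ha t⁻¹ (by positivity), a, rfl, rfl⟩, ?_⟩
    rw [add_sub_cancel_left, smul_smul, mul_inv_cancel₀ ht.ne', one_smul]

lemma ray_mem [IsTopologicalAddGroup X] [ContinuousSMul ℝ X] {D : Set X} (hcl : IsClosed D)
    (hcv : Convex ℝ D) {a₀ d : X} (h : ∀ s : ℝ, 0 < s → a₀ + s • d ∈ D)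
    {a : X} (ha : a ∈ D) {s : ℝ} (hs : 0 < s) : a + s • d ∈ D := by
  have key : ∀ n : ℕ, a + s • d + (1 / (n + 1) : ℝ) • (a₀ - a) ∈ D := by
    intro n
    have hl : (0:ℝ) < 1 / (n + 1) := by positivity
    have hl1 : (1 / (n + 1) : ℝ) ≤ 1 := by
      rw [div_le_one (by positivity)]; simp
    have hmem := hcv ha (h (((n:ℝ)+1) * s) (by positivity))
      (a := 1 - 1/((n:ℝ)+1)) (b := 1/((n:ℝ)+1)) (by linarith) hl.le (by ring)
    convert hmem using 1
    have hne : ((n:ℝ) + 1) ≠ 0 := by positivity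
    match_scalars <;> field_simp <;> ring
  have h1 : Filter.Tendsto (fun n : ℕ => (1 / (n + 1) : ℝ)) Filter.atTop (nhds 0) :=
    tendsto_one_div_add_atTop_nhds_zero_nat
  have htd := ((h1.smul_const (a₀ - a)).const_add (a + s • d))
  rw [zero_smul, add_zero] at htd
  exact hcl.mem_of_tendsto htd (Filter.Eventually.of_forall key)

lemma conj_le_of_bound {h : X → EReal} (hbot : ∀ x, h x ≠ ⊥) {q : X →L[ℝ] ℝ} {M : ℝ}
    (hb : ∀ x : X, ∀ r : ℝ, h x = (r : EReal) → q x - r ≤ M) :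
    conjFn h (toWD q) ≤ (M : EReal) := by
  refine iSup_le fun x => ?_
  by_cases ht : h x = ⊤
  · rw [show (toWD q) x = q x from rfl, ht]
    rw [show ((q x : ℝ) : EReal) - ⊤ = ⊥ by simp]
    exact bot_le
  · obtain ⟨r, hr⟩ : ∃ r : ℝ, h x = (r : EReal) :=
      ⟨(h x).toReal, (EReal.coe_toReal ht (hbot x)).symm⟩
    rw [show (toWD q) x = q x from rfl, hr,
      show ((q x : ℝ) : EReal) - (r : EReal) = ((q x - r : ℝ) : EReal) from rfl]
    exact_mod_cast hb x r hr

lemma sep_epi [IsTopologicalAddGroup X] [ContinuousSMul ℝ X] [LocallyConvexSpace ℝ X]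
    {h : X → EReal} (hg : InGamma h) {z : X × ℝ} (hz : z ∉ epiFn h) :
    ∃ (q : X →L[ℝ] ℝ) (β u : ℝ), (q z.1 + β * z.2 < u) ∧
      ∀ x : X, ∀ r : ℝ, h x ≤ (r : EReal) → u < q x + β * r := by
  obtain ⟨φ, u, hu1, hu2⟩ :=
    geometric_hahn_banach_point_closed hg.2.2.1 (isClosed_epiFn hg.2.2.2) hz
  refine ⟨φ.comp (ContinuousLinearMap.inl ℝ X ℝ), φ (0, 1), u, ?_, ?_⟩
  · have hzz : z = (z.1, 0) + z.2 • ((0:X), (1:ℝ)) := by simp [Prod.ext_iff]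
    have : φ z = φ (z.1, 0) + z.2 * φ (0, 1) := by
      rw [hzz, map_add, map_smul, smul_eq_mul]; simp
    simpa [this, mul_comm] using hu1
  · intro x r hxr
    have := hu2 (x, r) hxr
    have hxx : (x, r) = (x, 0) + r • ((0:X), (1:ℝ)) := by simp [Prod.ext_iff]
    have heq : φ (x, r) = φ (x, 0) + r * φ (0, 1) := by
      rw [hxx, map_add, map_smul, smul_eq_mul]
    simpa [heq, mul_comm] using this

omit [AddCommGroup X] [Module ℝ X] [TopologicalSpace X] in
lemma coe_le_of_lt_top {c : EReal} (hc : c < ⊤) : ∃ M : ℝ, c ≤ (M : EReal) := by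
  by_cases hb : c = ⊥
  · exact ⟨0, hb ▸ bot_le⟩
  · exact ⟨c.toReal, le_of_eq (EReal.coe_toReal hc.ne hb).symm⟩

lemma dom_conj_nonempty [IsTopologicalAddGroup X] [ContinuousSMul ℝ X] [LocallyConvexSpace ℝ X]
    {h : X → EReal} (hg : InGamma h) {a : X} {ra : ℝ} (ha : h a = (ra : EReal)) :
    ∃ q : X →L[ℝ] ℝ, conjFn h (toWD q) < ⊤ := by
  have hz : ((a, ra - 1) : X × ℝ) ∉ epiFn h := by
    simp only [epiFn, Set.mem_setOf_eq, ha, EReal.coe_le_coe_iff]; linarith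
  obtain ⟨q, β, u, h1, h2⟩ := sep_epi hg hz
  simp only at h1
  have hβ : 0 < β := by
    have := h2 a ra ha.le
    nlinarith
  refine ⟨(-β⁻¹) • q,
    lt_of_le_of_lt (conj_le_of_bound hg.1 (M := -u/β) ?_) (EReal.coe_lt_top _)⟩
  intro x r hr
  have := h2 x r hr.le
  have hq : ((-β⁻¹) • q) x = -β⁻¹ * q x := rfl
  rw [hq, le_div_iff₀ hβ]
  have hβ2 : β⁻¹ * β = 1 := inv_mul_cancel₀ hβ.ne'
  have hexp : (-β⁻¹ * q x - r) * β = -((β⁻¹ * β) * q x) - r * β := by ring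
  rw [hβ2, one_mul] at hexp
  linarith [hexp, this]

lemma key_lemma [IsTopologicalAddGroup X] [ContinuousSMul ℝ X] [LocallyConvexSpace ℝ X]
    {h : X → EReal} (hg : InGamma h) {a d : X} (ha : h a ≤ 0)
    (hd : recFn h d ≤ 0) {s : ℝ} (hs : 0 < s) : h (a + s • d) ≤ 0 := by
  by_contra hpos
  push_neg at hpos
  obtain ⟨ra, hra⟩ : ∃ r : ℝ, h a = (r : EReal) := by
    refine ⟨(h a).toReal, (EReal.coe_toReal ?_ (hg.1 a)).symm⟩
    exact fun ht => by simp [ht] at ha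
  have hra0 : ra ≤ 0 := by rw [hra] at ha; exact_mod_cast ha
  have hz : ((a + s • d, 0) : X × ℝ) ∉ epiFn h := by
    simp only [epiFn, Set.mem_setOf_eq, EReal.coe_zero, not_le]; exact hpos
  obtain ⟨q, β, u, h1, h2⟩ := sep_epi hg hz
  simp only [mul_zero, add_zero] at h1
  have hae : u < q a := by
    have := h2 a 0 (by rw [hra]; exact_mod_cast hra0)
    simpa using this
  have hqd : q d < 0 := by
    have hq1 : q (a + s • d) = q a + s * q d := by simp [map_add, map_smul]
    rw [hq1] at h1
    nlinarith
  have hβ : 0 ≤ β := by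
    by_contra hβn
    push_neg at hβn
    obtain ⟨n, hn⟩ : ∃ n : ℝ, n = (u - q a) / β + 1 := ⟨_, rfl⟩
    have hdiv : (0:ℝ) < (u - q a) / β := div_pos_of_neg_of_neg (by linarith) hβn
    have hn0 : 0 ≤ n := by rw [hn]; linarith
    have hun := h2 a n (by rw [hra]; exact_mod_cast le_trans hra0 hn0)
    have hβn' : β * n = (u - q a) + β := by
      rw [hn, mul_add, mul_one, mul_div_cancel₀ _ hβn.ne]
    linarith
  rcases eq_or_lt_of_le hβ with hβ0 | hβpos
  · obtain ⟨p₀, hp₀⟩ := dom_conj_nonempty hg hra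
    obtain ⟨M₀, hM₀⟩ := coe_le_of_lt_top hp₀
    obtain ⟨lam, hlamdef⟩ : ∃ lam : ℝ, lam = max 1 ((1 - p₀ d) / (-q d)) := ⟨_, rfl⟩
    have hlam0 : 0 < lam := by
      rw [hlamdef]; exact lt_of_lt_of_le one_pos (le_max_left _ _)
    have hlamval : 1 ≤ p₀ d + lam * (-q d) := by
      have h1' : (1 - p₀ d) / (-q d) ≤ lam := hlamdef ▸ le_max_right _ _
      have h2' : ((1 - p₀ d) / (-q d)) * (-q d) ≤ lam * (-q d) :=
        mul_le_mul_of_nonneg_right h1' (by linarith)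
      rw [div_mul_cancel₀ _ (by linarith : -q d ≠ 0)] at h2'
      linarith
    have hmem : conjFn h (toWD (p₀ - lam • q)) < ⊤ := by
      refine lt_of_le_of_lt (conj_le_of_bound hg.1 (M := M₀ - lam * u) ?_) (EReal.coe_lt_top _)
      intro x r hr
      have hqx : u < q x := by
        have := h2 x r hr.le
        rw [← hβ0] at this; simpa using this
      have hbound : p₀ x - r ≤ M₀ := by
        have hterm : ((p₀ x : ℝ) : EReal) - h x ≤ conjFn h (toWD p₀) :=
          le_iSup (f := fun y => ((((toWD p₀) y : ℝ)) : EReal) - h y) x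
        rw [hr, show ((p₀ x : ℝ) : EReal) - (r : EReal) = ((p₀ x - r : ℝ) : EReal) from rfl]
          at hterm
        exact_mod_cast le_trans hterm hM₀
      have : (p₀ - lam • q) x = p₀ x - lam * q x := rfl
      rw [this]
      nlinarith
    have hge : ((((p₀ - lam • q) d : ℝ)) : EReal) ≤ recFn h d :=
      le_iSup₂ (f := fun q _ => ((q d : ℝ) : EReal)) (toWD (p₀ - lam • q)) hmem
    have hval : ((p₀ - lam • q) d : ℝ) = p₀ d + lam * (-q d) := by
      have : (p₀ - lam • q) d = p₀ d - lam * q d := rfl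
      rw [this]; ring
    rw [hval] at hge
    have h1r : (1 : EReal) ≤ recFn h d := le_trans (by exact_mod_cast hlamval) hge
    have h10 : (1 : EReal) ≤ 0 := le_trans h1r hd
    have : (1:ℝ) ≤ 0 := by exact_mod_cast h10
    linarith
  · have hmem : conjFn h (toWD ((-β⁻¹) • q)) < ⊤ := by
      refine lt_of_le_of_lt (conj_le_of_bound hg.1 (M := -u/β) ?_) (EReal.coe_lt_top _)
      intro x r hr
      have := h2 x r hr.le
      have hq : ((-β⁻¹) • q) x = -β⁻¹ * q x := rfl
      rw [hq, le_div_iff₀ hβpos]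
      have hβ2 : β⁻¹ * β = 1 := inv_mul_cancel₀ hβpos.ne'
      have hexp : (-β⁻¹ * q x - r) * β = -((β⁻¹ * β) * q x) - r * β := by ring
      rw [hβ2, one_mul] at hexp
      linarith [hexp, this]
    have hge : (((((-β⁻¹) • q) d : ℝ)) : EReal) ≤ recFn h d :=
      le_iSup₂ (f := fun q _ => ((q d : ℝ) : EReal)) (toWD ((-β⁻¹) • q)) hmem
    have hval : (((-β⁻¹) • q) d : ℝ) = -β⁻¹ * q d := rfl
    have hpos' : 0 < -β⁻¹ * q d := by
      have : 0 < β⁻¹ := inv_pos.2 hβpos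
      nlinarith
    rw [hval] at hge
    have : (0 : EReal) < recFn h d := lt_of_lt_of_le (by exact_mod_cast hpos') hge
    exact absurd (lt_of_lt_of_le this hd) (lt_irrefl 0)

end Aux

/-- Theorem 4, (iv) ⇔ (v), when moreover `A ≠ ∅`. -/
theorem stmt13 [IsTopologicalAddGroup X] [ContinuousSMul ℝ X] [LocallyConvexSpace ℝ X] [T2Space X] {I : Type*} (C : Set X) (hCne : C.Nonempty) (hCcl : IsClosed C) (hCcv : Convex ℝ C)
    (f : I → X → EReal) (hf : ∀ i, InGamma (f i))
    (g : X → EReal) (hg : InGamma g)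
    (hA : solSet C f ∩ domFn g = ∅) (hAne : (solSet C f).Nonempty)
    (p : WeakDual ℝ X) :
    (∃ d ∈ (⋂ i, {x : X | recFn (f i) x ≤ (0 : EReal)}) ∩ recCone C,
        recFn g d < ((p d : ℝ) : EReal)) ↔
      ∃ d ∈ recCone (solSet C f), recFn g d < ((p d : ℝ) : EReal)  := by
  classical
  -- closedness and convexity of the solution set
  have hEq : solSet C f = C ∩ ⋂ i, {x : X | f i x ≤ (0 : EReal)} := by
    ext x; simp [solSet, Set.mem_iInter]
  have hsubcl : ∀ i, IsClosed {x : X | f i x ≤ (0 : EReal)} := fun i =>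
    (hf i).2.2.2.isClosed_preimage 0
  have hsubcv : ∀ i, Convex ℝ {x : X | f i x ≤ (0 : EReal)} := by
    intro i x hx y hy a b ha hb hab
    have := (hf i).2.2.1 (show ((x, (0:ℝ)) : X × ℝ) ∈ _ from by
        simpa [EReal.coe_zero] using hx)
      (show ((y, (0:ℝ)) : X × ℝ) ∈ _ from by simpa [EReal.coe_zero] using hy) ha hb hab
    simpa [Prod.smul_mk, EReal.coe_zero] using this
  have hAcl : IsClosed (solSet C f) := by
    rw [hEq]; exact hCcl.inter (isClosed_iInter hsubcl)
  have hAcv : Convex ℝ (solSet C f) := by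
    rw [hEq]; exact hCcv.inter (convex_iInter hsubcv)
  obtain ⟨a₀, hA0⟩ := hAne
  constructor
  · rintro ⟨d, ⟨hd1, hd2⟩, hlt⟩
    have hray : ∀ s : ℝ, 0 < s → a₀ + s • d ∈ solSet C f := by
      intro s hs
      refine ⟨mem_recCone_iff.mp hd2 a₀ hA0.1 s hs, fun i => ?_⟩
      exact key_lemma (hf i) (hA0.2 i) (by simpa using Set.mem_iInter.mp hd1 i) hs
    refine ⟨d, mem_recCone_iff.mpr fun a ha s hs => ray_mem hAcl hAcv hray ha hs, hlt⟩
  · rintro ⟨d, hdA, hlt⟩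
    have hray : ∀ s : ℝ, 0 < s → a₀ + s • d ∈ solSet C f := fun s hs =>
      mem_recCone_iff.mp hdA a₀ hA0 s hs
    refine ⟨d, ⟨Set.mem_iInter.2 fun i => ?_, ?_⟩, hlt⟩
    · -- recFn (f i) d ≤ 0
      show recFn (f i) d ≤ (0 : EReal)
      refine iSup₂_le fun q hq => ?_
      obtain ⟨M, hM⟩ := coe_le_of_lt_top hq
      suffices hqd : q d ≤ 0 by exact_mod_cast hqd
      by_contra hqd
      push_neg at hqd
      -- choose large s
      obtain ⟨s, hsdef⟩ : ∃ s : ℝ, s = max 1 ((M - q a₀ + 1) / q d) := ⟨_, rfl⟩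
      have hs0 : 0 < s := by
        rw [hsdef]; exact lt_of_lt_of_le one_pos (le_max_left _ _)
      obtain ⟨hxC, hxf⟩ := hray s hs0
      obtain ⟨r, hr, hr0⟩ : ∃ r : ℝ, f i (a₀ + s • d) = (r : EReal) ∧ r ≤ 0 := by
        have hb := (hf i).1 (a₀ + s • d)
        have ht : f i (a₀ + s • d) ≠ ⊤ := fun hc => by have := hxf i; simp [hc] at this
        refine ⟨(f i (a₀ + s • d)).toReal, (EReal.coe_toReal ht hb).symm, ?_⟩
        have := hxf i
        rw [← EReal.coe_toReal ht hb] at this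
        exact_mod_cast this
      have hterm : ((q (a₀ + s • d) : ℝ) : EReal) - f i (a₀ + s • d) ≤ conjFn (f i) q :=
        le_iSup (f := fun y => ((q y : ℝ) : EReal) - f i y) (a₀ + s • d)
      rw [hr, show ((q (a₀ + s • d) : ℝ) : EReal) - (r : EReal)
          = ((q (a₀ + s • d) - r : ℝ) : EReal) from rfl] at hterm
      have hre : q (a₀ + s • d) - r ≤ M := by exact_mod_cast le_trans hterm hM
      have hqs : q (a₀ + s • d) = q a₀ + s * q d := by simp [map_add, map_smul]
      have hslb : (M - q a₀ + 1) / q d ≤ s := hsdef ▸ le_max_right _ _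
      have hmul : ((M - q a₀ + 1) / q d) * q d ≤ s * q d :=
        mul_le_mul_of_nonneg_right hslb hqd.le
      rw [div_mul_cancel₀ _ hqd.ne'] at hmul
      rw [hqs] at hre
      linarith
    · -- d ∈ recCone C
      refine mem_recCone_iff.mpr fun a ha s hs => ?_
      exact ray_mem hCcl hCcv (fun s hs => (hray s hs).1) ha hs
end
end

section
/- (The closure of the characteristic cone of inconsistent systems.) The following are equivalent: (i) σ is inconsistent, i.e. A = ∅; (ii) w*-cl K = w*-cl(cone Ω + barr C) × ℝ; (iii) w*-cl K = w*-cl cone(Ω ∪ barr C) × ℝ; (iv) w*-cl K = w*-cl cone(Ω + barr C) × ℝ. -/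
open Pointwise

noncomputable section

variable {X : Type*} [AddCommGroup X] [Module ℝ X] [TopologicalSpace X]

section ConeGen
variable {V : Type*} [AddCommGroup V] [Module ℝ V] {D E : Set V}

lemma zero_mem_coneGen (D : Set V) : (0:V) ∈ coneGen D := Or.inl rfl

lemma mem_coneGen_of_mem {x : V} (hx : x ∈ D) : x ∈ coneGen D :=
  Or.inr ⟨1, zero_le_one, x, subset_convexHull ℝ D hx, (one_smul ℝ x).symm⟩

lemma coneGen_subset {S : Set V} (h0 : (0:V) ∈ S) (hc : Convex ℝ S)
    (hs : ∀ t : ℝ, 0 ≤ t → ∀ x ∈ S, t • x ∈ S) (hD : D ⊆ S) : coneGen D ⊆ S := by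
  rintro z (rfl | ⟨t, ht, x, hx, rfl⟩)
  · exact h0
  · exact hs t ht x (convexHull_min hD hc hx)

lemma smul_mem_coneGen {t : ℝ} (ht : 0 ≤ t) {z : V} (hz : z ∈ coneGen D) :
    t • z ∈ coneGen D := by
  rcases hz with rfl | ⟨s, hs, x, hx, rfl⟩
  · rw [smul_zero]; exact zero_mem_coneGen D
  · exact Or.inr ⟨t * s, mul_nonneg ht hs, x, hx, (smul_smul t s x)⟩

lemma convex_coneGen (D : Set V) : Convex ℝ (coneGen D) := by
  rintro z hz w hw a b ha hb hab
  rcases hz with rfl | ⟨s, hs, x, hx, rfl⟩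
  · rw [smul_zero, zero_add]; exact smul_mem_coneGen hb hw
  rcases hw with rfl | ⟨u, hu, y, hy, rfl⟩
  · rw [smul_zero, add_zero]; exact smul_mem_coneGen ha (Or.inr ⟨s, hs, x, hx, rfl⟩)
  rw [smul_smul, smul_smul]
  rcases eq_or_lt_of_le (add_nonneg (mul_nonneg ha hs) (mul_nonneg hb hu)) with hzero | hpos
  · have h1 : a * s = 0 := by nlinarith [mul_nonneg ha hs, mul_nonneg hb hu]
    have h2 : b * u = 0 := by nlinarith [mul_nonneg ha hs, mul_nonneg hb hu]
    rw [h1, h2, zero_smul, zero_smul, add_zero]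
    exact zero_mem_coneGen D
  · set c := a * s + b * u with hc
    refine Or.inr ⟨c, le_of_lt hpos, (a*s/c) • x + (b*u/c) • y, ?_, ?_⟩
    · refine (convex_convexHull ℝ D) hx hy (div_nonneg (mul_nonneg ha hs) hpos.le)
        (div_nonneg (mul_nonneg hb hu) hpos.le) ?_
      field_simp
      exact hc.symm
    · rw [smul_add, smul_smul, smul_smul]
      rw [mul_div_cancel₀ _ (ne_of_gt hpos), mul_div_cancel₀ _ (ne_of_gt hpos)]

lemma add_mem_coneGen {z w : V} (hz : z ∈ coneGen D) (hw : w ∈ coneGen D) :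
    z + w ∈ coneGen D := by
  have h := (convex_coneGen D) hz hw (by norm_num : (0:ℝ) ≤ 1/2) (by norm_num : (0:ℝ) ≤ 1/2)
    (by norm_num)
  have h2 := smul_mem_coneGen (by norm_num : (0:ℝ) ≤ 2) h
  rwa [smul_add, smul_smul, smul_smul, show (2:ℝ) * (1/2) = 1 by norm_num, one_smul, one_smul] at h2

lemma coneGen_mono (hDE : D ⊆ E) : coneGen D ⊆ coneGen E :=
  coneGen_subset (zero_mem_coneGen E) (convex_coneGen E)
    (fun _ ht _ hx => smul_mem_coneGen ht hx) (fun _ hx => mem_coneGen_of_mem (hDE hx))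

end ConeGen

section Conj
variable {I : Type*}

@[simp] lemma wd_add_apply (p q : WeakDual ℝ X) (x : X) : (p + q) x = p x + q x := rfl
@[simp] lemma wd_smul_apply (t : ℝ) (p : WeakDual ℝ X) (x : X) : (t • p) x = t * p x := rfl
@[simp] lemma wd_zero_apply (x : X) : (0 : WeakDual ℝ X) x = 0 := rfl

lemma conjFn_le_iff {h : X → EReal} {p : WeakDual ℝ X} {r : EReal} :
    conjFn h p ≤ r ↔ ∀ x, (p x : EReal) - h x ≤ r := iSup_le_iff

lemma mem_epi_conj_iff {h : X → EReal} {p : WeakDual ℝ X} {r : ℝ} :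
    (p, r) ∈ epiFn (conjFn h) ↔ ∀ x, (p x : EReal) - h x ≤ (r : EReal) := by
  change conjFn h p ≤ (r : EReal) ↔ _
  exact iSup_le_iff

lemma le_conjFn {h : X → EReal} (p : WeakDual ℝ X) (x : X) :
    (p x : EReal) - h x ≤ conjFn h p := le_iSup (fun x => (p x : EReal) - h x) x

lemma mem_epi_indicator_iff {C : Set X} {p : WeakDual ℝ X} {r : ℝ} :
    (p, r) ∈ epiFn (conjFn (indicatorE C)) ↔ ∀ x ∈ C, p x ≤ r := by
  rw [mem_epi_conj_iff]
  constructor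
  · intro H x hx
    have := H x
    rw [indicatorE, if_pos hx, sub_zero, EReal.coe_le_coe_iff] at this
    exact this
  · intro H x
    by_cases hx : x ∈ C
    · rw [indicatorE, if_pos hx, sub_zero, EReal.coe_le_coe_iff]
      exact H x hx
    · rw [indicatorE, if_neg hx, EReal.sub_top]
      exact bot_le

lemma epi_upward {V : Type*} {h : V → EReal} {p : V} {r s : ℝ} (hrs : r ≤ s)
    (hp : (p, r) ∈ epiFn h) : (p, s) ∈ epiFn h :=
  le_trans hp (EReal.coe_le_coe_iff.2 hrs)

lemma exists_epi_of_mem_dom {h : X → EReal} {p : WeakDual ℝ X}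
    (hp : p ∈ domFn (conjFn h)) : ∃ r : ℝ, (p, r) ∈ epiFn (conjFn h) := by
  obtain ⟨r, hr, -⟩ := EReal.exists_between_coe_real hp
  exact ⟨r, le_of_lt hr⟩

lemma mem_dom_of_epi {h : X → EReal} {p : WeakDual ℝ X} {r : ℝ}
    (hp : (p, r) ∈ epiFn (conjFn h)) : p ∈ domFn (conjFn h) :=
  lt_of_le_of_lt hp (EReal.coe_lt_top r)

lemma mem_barCone_iff {C : Set X} {p : WeakDual ℝ X} :
    p ∈ barCone C ↔ ∃ M : ℝ, ∀ x ∈ C, p x ≤ M := by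
  constructor
  · intro hp
    obtain ⟨r, hr⟩ := exists_epi_of_mem_dom hp
    exact ⟨r, mem_epi_indicator_iff.1 hr⟩
  · rintro ⟨M, hM⟩
    exact mem_dom_of_epi (mem_epi_indicator_iff.2 hM)

lemma zero_mem_barCone (C : Set X) : (0 : WeakDual ℝ X) ∈ barCone C :=
  mem_barCone_iff.2 ⟨0, fun x _ => by simp⟩

lemma convex_barCone (C : Set X) : Convex ℝ (barCone C) := by
  intro p hp q hq a b ha hb hab
  obtain ⟨M, hM⟩ := mem_barCone_iff.1 hp
  obtain ⟨N, hN⟩ := mem_barCone_iff.1 hq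
  refine mem_barCone_iff.2 ⟨a * M + b * N, fun x hx => ?_⟩
  have h1 := hM x hx
  have h2 := hN x hx
  have : (a • p + b • q) x = a * p x + b * q x := by simp
  rw [this]
  have := mul_le_mul_of_nonneg_left h1 ha
  have := mul_le_mul_of_nonneg_left h2 hb
  linarith

lemma smul_mem_barCone {C : Set X} {t : ℝ} (ht : 0 ≤ t) {p : WeakDual ℝ X}
    (hp : p ∈ barCone C) : t • p ∈ barCone C := by
  obtain ⟨M, hM⟩ := mem_barCone_iff.1 hp
  refine mem_barCone_iff.2 ⟨t * M, fun x hx => ?_⟩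
  have := mul_le_mul_of_nonneg_left (hM x hx) ht
  simpa using this

end Conj

section Rep

def evalLin (x : X) : WeakDual ℝ X →ₗ[ℝ] ℝ where
  toFun p := p x
  map_add' p q := rfl
  map_smul' t p := rfl

lemma weakdual_rep (ψ : WeakDual ℝ X →L[ℝ] ℝ) : ∃ a : X, ∀ p : WeakDual ℝ X, ψ p = p a := by
  have hind : Topology.IsInducing (fun (p : WeakDual ℝ X) (y : X) => (p y : ℝ)) := ⟨rfl⟩
  have h0 : ψ ⁻¹' (Set.Ioo (-1:ℝ) 1) ∈ nhds (0 : WeakDual ℝ X) := by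
    apply ψ.continuous.continuousAt.preimage_mem_nhds
    rw [map_zero]
    exact Ioo_mem_nhds (by norm_num) (by norm_num)
  rw [hind.nhds_eq_comap 0, Filter.mem_comap] at h0
  obtain ⟨V, hV, hVsub⟩ := h0
  rw [nhds_pi, Filter.mem_pi] at hV
  obtain ⟨s, hs, W, hW, hWsub⟩ := hV
  have key : ∀ p : WeakDual ℝ X, (∀ x ∈ s, p x = 0) → ψ p = 0 := by
    intro p hp
    by_contra hne
    have hmem : ∀ t : ℝ, (fun y => (((t • p) : WeakDual ℝ X) y : ℝ)) ∈ s.pi W := by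
      intro t x hx
      have : ((t • p : WeakDual ℝ X)) x = 0 := by rw [wd_smul_apply, hp x hx, mul_zero]
      simpa [this] using mem_of_mem_nhds (hW x)
    have h2 : ∀ t : ℝ, ψ (t • p) ∈ Set.Ioo (-1:ℝ) 1 := fun t => hVsub (hWsub (hmem t))
    have h3 := h2 (2 / ψ p)
    rw [map_smul, smul_eq_mul, div_mul_cancel₀ _ hne] at h3
    simp only [Set.mem_Ioo] at h3
    linarith [h3.2]
  haveI : Finite s := hs.to_subtype
  haveI : Fintype s := Fintype.ofFinite _
  set L : s → (WeakDual ℝ X →ₗ[ℝ] ℝ) := fun x => evalLin (x : X) with hL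
  have hker : ⨅ i : s, LinearMap.ker (L i) ≤ LinearMap.ker (ψ : WeakDual ℝ X →ₗ[ℝ] ℝ) := by
    intro p hp
    rw [Submodule.mem_iInf] at hp
    rw [LinearMap.mem_ker]
    exact key p (fun x hx => hp ⟨x, hx⟩)
  have hspan := mem_span_of_iInf_ker_le_ker hker
  obtain ⟨c, hc⟩ := (Submodule.mem_span_range_iff_exists_fun ℝ).1 hspan
  refine ⟨∑ i : s, c i • (i : X), fun p => ?_⟩
  have h4 := congrArg (fun (K : WeakDual ℝ X →ₗ[ℝ] ℝ) => K p) hc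
  simp only [LinearMap.coe_sum, Finset.sum_apply, LinearMap.smul_apply, smul_eq_mul] at h4
  have h5 : p (∑ i : s, c i • (i : X)) = ∑ i : s, c i * p (i : X) := by
    rw [map_sum]
    congr 1
    ext i
    rw [map_smul, smul_eq_mul]
  rw [h5]
  have h6 : ψ p = (ψ : WeakDual ℝ X →ₗ[ℝ] ℝ) p := rfl
  rw [h6, ← h4]
  rfl

end Rep

section HB
variable [IsTopologicalAddGroup X] [ContinuousSMul ℝ X] [LocallyConvexSpace ℝ X]

lemma isClosed_epi_of_lsc {h : X → EReal} (hl : LowerSemicontinuous h) :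
    IsClosed {q : X × ℝ | h q.1 ≤ (q.2 : EReal)} := by
  have h1 : IsClosed {p : X × EReal | h p.1 ≤ p.2} := hl.isClosed_epigraph
  have h2 : {q : X × ℝ | h q.1 ≤ (q.2 : EReal)} =
      (fun q : X × ℝ => (q.1, (q.2 : EReal))) ⁻¹' {p : X × EReal | h p.1 ≤ p.2} := rfl
  rw [h2]
  exact h1.preimage (continuous_fst.prodMk (continuous_coe_real_ereal.comp continuous_snd))

lemma conj_le_aux {h : X → EReal} (hbot : ∀ x, h x ≠ ⊥) {q : WeakDual ℝ X} {M : ℝ}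
    (hb : ∀ (x : X) (s : ℝ), h x = (s : EReal) → q x ≤ M + s) : conjFn h q ≤ (M : EReal) := by
  apply iSup_le
  intro x
  by_cases hx : h x = ⊤
  · rw [hx, EReal.sub_top]; exact bot_le
  · have hs : h x = ((h x).toReal : EReal) := (EReal.coe_toReal hx (hbot x)).symm
    rw [hs, ← EReal.coe_sub, EReal.coe_le_coe_iff]
    linarith [hb x _ hs]

lemma real_div_step {pc u c s qx : ℝ} (hc : c < 0) (h : pc + c * s < u)
    (hq : qx = (-c)⁻¹ * pc) : qx ≤ u * (-c)⁻¹ + s := by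
  have hcpos : (0:ℝ) < -c := by linarith
  have h1 : pc ≤ u - c * s := by linarith
  have h2 := mul_le_mul_of_nonneg_left h1 (le_of_lt (inv_pos.2 hcpos))
  have h3 : (-c)⁻¹ * (u - c * s) = u * (-c)⁻¹ + s := by
    field_simp [ne_of_lt hc]
    ring
  linarith [h2, h3.le, h3.ge]

lemma sep_epi_s15 {h : X → EReal} (hconv : Convex ℝ {q : X × ℝ | h q.1 ≤ (q.2 : EReal)})
    (hcl : IsClosed {q : X × ℝ | h q.1 ≤ (q.2 : EReal)}) {xb : X} {ρ : ℝ}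
    (hnot : ¬ h xb ≤ (ρ : EReal)) (hne : ∃ (x0 : X) (r0 : ℝ), h x0 ≤ (r0 : EReal)) :
    ∃ (p : X →L[ℝ] ℝ) (c u : ℝ), c ≤ 0 ∧
      (∀ (x : X) (s : ℝ), h x ≤ (s : EReal) → p x + c * s < u) ∧ u < p xb + c * ρ := by
  have hmem : (xb, ρ) ∉ {q : X × ℝ | h q.1 ≤ (q.2 : EReal)} := hnot
  obtain ⟨φ, u, hlt, hgt⟩ := geometric_hahn_banach_closed_point hconv hcl hmem
  set p : X →L[ℝ] ℝ := φ.comp (ContinuousLinearMap.inl ℝ X ℝ) with hp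
  set c : ℝ := φ (0, 1) with hcdef
  have hφ : ∀ (x : X) (r : ℝ), φ (x, r) = p x + c * r := by
    intro x r
    have hd : (x, r) = (x, (0:ℝ)) + r • ((0:X), (1:ℝ)) := by
      simp [Prod.ext_iff]
    rw [hd, map_add, map_smul, smul_eq_mul, hcdef, hp]
    simp only [ContinuousLinearMap.comp_apply, ContinuousLinearMap.inl_apply]
    ring
  have hc0 : c ≤ 0 := by
    by_contra hcpos
    push_neg at hcpos
    obtain ⟨x0, r0, hx0⟩ := hne
    have hb : ∀ t : ℝ, 0 ≤ t → p x0 + c * (r0 + t) < u := by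
      intro t ht
      have hmem2 : (x0, r0 + t) ∈ {q : X × ℝ | h q.1 ≤ (q.2 : EReal)} := by
        show h x0 ≤ ((r0 + t : ℝ) : EReal)
        exact le_trans hx0 (EReal.coe_le_coe_iff.2 (by linarith))
      have := hlt _ hmem2
      rwa [hφ] at this
    have h1 := hb 0 le_rfl
    rw [add_zero] at h1
    have h2 := hb ((u - (p x0 + c * r0)) / c) (div_nonneg (by linarith) (le_of_lt hcpos))
    rw [mul_add, mul_div_cancel₀ _ (ne_of_gt hcpos)] at h2
    linarith
  refine ⟨p, c, u, hc0, ?_, ?_⟩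
  · intro x s hxs
    have := hlt (x, s) hxs
    rwa [hφ] at this
  · have := hgt
    rwa [hφ] at this

lemma exists_dom_conj {h : X → EReal} (hg : InGamma h) :
    ∃ (q : WeakDual ℝ X) (M : ℝ), conjFn h q ≤ (M : EReal) := by
  obtain ⟨hbot, ⟨x0, hx0⟩, hconv, hlsc⟩ := hg
  set r0 := (h x0).toReal with hr0def
  have hr0 : h x0 = (r0 : EReal) := (EReal.coe_toReal hx0 (hbot x0)).symm
  have hnot : ¬ h x0 ≤ ((r0 - 1 : ℝ) : EReal) := by
    rw [hr0, EReal.coe_le_coe_iff]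
    intro hcon; linarith
  obtain ⟨p, c, u, hc0, hlt, hgt⟩ := sep_epi_s15 hconv (isClosed_epi_of_lsc hlsc) hnot
    ⟨x0, r0, le_of_eq hr0⟩
  have hclt : c < 0 := by
    have h1 := hlt x0 r0 (le_of_eq hr0)
    have h2 : c * (r0 - 1) = c * r0 - c := by ring
    rcases lt_or_eq_of_le hc0 with hlt0 | heq
    · exact hlt0
    · exfalso; rw [heq] at h1 hgt; simp at h1 hgt; linarith
  set q : WeakDual ℝ X := ((-c)⁻¹ • p : X →L[ℝ] ℝ) with hqdef
  refine ⟨q, u * (-c)⁻¹, conj_le_aux hbot ?_⟩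
  intro x s hxs
  exact real_div_step hclt (hlt x s (le_of_eq hxs)) rfl

lemma le_zero_of_conj_bound {h : X → EReal} (hg : InGamma h) {xb : X}
    (hxb : ∀ q : WeakDual ℝ X, (q xb : EReal) ≤ conjFn h q) : h xb ≤ 0 := by
  by_contra hpos
  have hnot : ¬ h xb ≤ ((0 : ℝ) : EReal) := by rwa [EReal.coe_zero]
  obtain ⟨hbot, ⟨x0, hx0⟩, hconv, hlsc⟩ := hg
  have hr0 : h x0 = (((h x0).toReal : ℝ) : EReal) := (EReal.coe_toReal hx0 (hbot x0)).symm
  obtain ⟨p, c, u, hc0, hlt, hgt⟩ := sep_epi_s15 hconv (isClosed_epi_of_lsc hlsc) hnot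
    ⟨x0, (h x0).toReal, le_of_eq hr0⟩
  rw [mul_zero, add_zero] at hgt
  rcases lt_or_eq_of_le hc0 with hclt | hceq
  · set q : WeakDual ℝ X := ((-c)⁻¹ • p : X →L[ℝ] ℝ) with hqdef
    have hM : conjFn h q ≤ ((u * (-c)⁻¹ : ℝ) : EReal) := by
      apply conj_le_aux hbot
      intro x s hxs
      exact real_div_step hclt (hlt x s (le_of_eq hxs)) rfl
    have h1 : (q xb : EReal) ≤ ((u * (-c)⁻¹ : ℝ) : EReal) := le_trans (hxb q) hM
    rw [EReal.coe_le_coe_iff] at h1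
    have hq : q xb = (-c)⁻¹ * p xb := rfl
    have hcpos : (0:ℝ) < -c := by linarith
    have h2 := mul_le_mul_of_nonneg_left h1 (le_of_lt hcpos)
    rw [hq, ← mul_assoc, mul_inv_cancel₀ (ne_of_gt hcpos), one_mul] at h2
    have h3 : -c * (u * (-c)⁻¹) = u := by field_simp [ne_of_lt hclt]
    rw [h3] at h2
    linarith
  · -- c = 0
    rw [hceq] at hlt
    simp only [zero_mul, add_zero] at hlt
    obtain ⟨q0, M0, hq0⟩ := exists_dom_conj ⟨hbot, ⟨x0, hx0⟩, hconv, hlsc⟩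
    have key : ∀ t : ℝ, 0 ≤ t → q0 xb + t * p xb ≤ M0 + t * u := by
      intro t ht
      set qt : WeakDual ℝ X := q0 + (show WeakDual ℝ X from t • p) with hqt
      have hconj : conjFn h qt ≤ ((M0 + t * u : ℝ) : EReal) := by
        apply conj_le_aux hbot
        intro x s hxs
        have hA : (q0 x : EReal) - (s : EReal) ≤ (M0 : EReal) := by
          have := le_trans (le_conjFn q0 x) hq0
          rwa [hxs] at this
        rw [← EReal.coe_sub, EReal.coe_le_coe_iff] at hA
        have hB : p x < u := hlt x s (le_of_eq hxs)
        have hqtx : qt x = q0 x + t * p x := rfl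
        rw [hqtx]
        nlinarith [mul_le_mul_of_nonneg_left (le_of_lt hB) ht]
      have h1 := le_trans (hxb qt) hconj
      rw [EReal.coe_le_coe_iff] at h1
      have hqtxb : qt xb = q0 xb + t * p xb := rfl
      rwa [hqtxb] at h1
    have h0 := key 0 le_rfl
    simp only [zero_mul, add_zero] at h0
    set d : ℝ := p xb - u with hd
    have hdpos : 0 < d := by rw [hd]; linarith
    set t := (M0 - q0 xb + 1) / d with ht
    have htpos : 0 ≤ t := div_nonneg (by linarith) (le_of_lt hdpos)
    have h1 := key t htpos
    have h2 : t * d = M0 - q0 xb + 1 := by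
      rw [ht, div_mul_cancel₀ _ (ne_of_gt hdpos)]
    nlinarith

lemma mem_C_of_bound {C : Set X} (hCcl : IsClosed C) (hCcv : Convex ℝ C) {xb : X}
    (hb : ∀ (q : WeakDual ℝ X) (M : ℝ), (∀ x ∈ C, q x ≤ M) → q xb ≤ M) : xb ∈ C := by
  by_contra hx
  obtain ⟨g, u, hlt, hgt⟩ := geometric_hahn_banach_closed_point hCcv hCcl hx
  have := hb (show WeakDual ℝ X from g) u (fun x hx' => le_of_lt (hlt x hx'))
  exact absurd hgt (not_lt.2 this)

end HB

section CharCone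

instance : LocallyConvexSpace ℝ (WeakDual ℝ X) := WeakBilin.locallyConvexSpace

lemma cont_smul_W (t : ℝ) : Continuous fun p : WeakDual ℝ X => t • p :=
  WeakDual.continuous_of_continuous_eval fun y => by
    exact (continuous_const.mul (WeakDual.eval_continuous y) : Continuous fun p : WeakDual ℝ X => t * p y)

lemma cont_smul_WR (t : ℝ) : Continuous fun z : WeakDual ℝ X × ℝ => t • z := by
  have h1 : Continuous fun z : WeakDual ℝ X × ℝ => t • z.1 := (cont_smul_W t).comp continuous_fst
  have h2 : Continuous fun z : WeakDual ℝ X × ℝ => t • z.2 := by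
    exact
      (continuous_const.mul continuous_snd : Continuous fun z : WeakDual ℝ X × ℝ => t * z.2)
  exact h1.prodMk h2

lemma clK_smul {D : Set (WeakDual ℝ X × ℝ)} {t : ℝ} (ht : 0 ≤ t) {z : WeakDual ℝ X × ℝ}
    (hz : z ∈ closure (coneGen D)) : t • z ∈ closure (coneGen D) :=
  map_mem_closure (cont_smul_WR t) hz (fun _ hw => smul_mem_coneGen ht hw)

lemma clK_add {D : Set (WeakDual ℝ X × ℝ)} {z w : WeakDual ℝ X × ℝ}
    (hz : z ∈ closure (coneGen D)) (hw : w ∈ closure (coneGen D)) :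
    z + w ∈ closure (coneGen D) := by
  have hc := (convex_coneGen D).closure
  have hmid := hc hz hw (by norm_num : (0:ℝ) ≤ 1/2) (by norm_num : (0:ℝ) ≤ 1/2) (by norm_num)
  have h2 := clK_smul (t := 2) (by norm_num) hmid
  rwa [smul_add, smul_smul, smul_smul, show (2:ℝ) * (1/2) = 1 by norm_num, one_smul,
    one_smul] at h2

variable {I : Type*} {C : Set X} {f : I → X → EReal}

lemma epiC_subset_charCone : epiFn (conjFn (indicatorE C)) ⊆ charCone C f :=
  fun _ hz => mem_coneGen_of_mem (Or.inl hz)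

lemma epiF_subset_charCone (i : I) : epiFn (conjFn (f i)) ⊆ charCone C f :=
  fun _ hz => mem_coneGen_of_mem (Or.inr (Set.mem_iUnion.2 ⟨i, hz⟩))

lemma farkas [IsTopologicalAddGroup X] [ContinuousSMul ℝ X] [LocallyConvexSpace ℝ X]
    (hCcl : IsClosed C) (hCcv : Convex ℝ C)
    (hf : ∀ i, InGamma (f i)) (hsol : solSet C f = ∅) :
    ((0 : WeakDual ℝ X), (-1 : ℝ)) ∈ closure (charCone C f) := by
  by_contra hni
  obtain ⟨φ, u, hlt, hgt⟩ := geometric_hahn_banach_closed_point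
    ((convex_coneGen _).closure) isClosed_closure hni
  have hu0 : 0 < u := by
    have h := hlt 0 (subset_closure (zero_mem_coneGen _))
    rwa [map_zero] at h
  have hle0 : ∀ z ∈ closure (charCone C f), φ z ≤ 0 := by
    intro z hz
    by_contra hzpos
    push_neg at hzpos
    have ht : (0:ℝ) ≤ u / φ z + 1 := by positivity
    have hmem : (u / φ z + 1) • z ∈ closure (charCone C f) := clK_smul ht hz
    have h1 := hlt _ hmem
    rw [map_smul, smul_eq_mul] at h1
    have h2 : (u / φ z + 1) * φ z = u + φ z := by field_simp
    rw [h2] at h1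
    linarith
  set ψ : WeakDual ℝ X →L[ℝ] ℝ := φ.comp (ContinuousLinearMap.inl ℝ (WeakDual ℝ X) ℝ) with hψ
  obtain ⟨a, ha⟩ := weakdual_rep ψ
  set c : ℝ := φ (0, 1) with hcdef
  have hφ : ∀ (p : WeakDual ℝ X) (r : ℝ), φ (p, r) = p a + c * r := by
    intro p r
    have hd : ((p, r) : WeakDual ℝ X × ℝ) = (p, (0:ℝ)) + r • ((0 : WeakDual ℝ X), (1:ℝ)) := by
      simp [Prod.ext_iff]
    rw [hd, map_add, map_smul, smul_eq_mul, hcdef]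
    have h3 : φ (p, (0:ℝ)) = ψ p := rfl
    rw [h3, ha p]
    ring
  have hc : c < 0 := by
    have h4 := hgt
    rw [hφ, wd_zero_apply] at h4
    simp at h4
    linarith
  have hcpos : (0:ℝ) < -c := by linarith
  set xb : X := (-c)⁻¹ • a with hxb
  have hkey : ∀ (p : WeakDual ℝ X) (r : ℝ), (p, r) ∈ charCone C f → p xb ≤ r := by
    intro p r hpr
    have h1 : φ (p, r) ≤ 0 := hle0 _ (subset_closure hpr)
    rw [hφ] at h1
    have h2 : p xb = (-c)⁻¹ * p a := by rw [hxb, map_smul, smul_eq_mul]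
    rw [h2]
    have h3 : p a ≤ -c * r := by linarith
    have h4 := mul_le_mul_of_nonneg_left h3 (le_of_lt (inv_pos.2 hcpos))
    rw [← mul_assoc, inv_mul_cancel₀ (ne_of_gt hcpos), one_mul] at h4
    exact h4
  have hxbC : xb ∈ C := mem_C_of_bound hCcl hCcv
    (fun q M hqM => hkey q M (epiC_subset_charCone (mem_epi_indicator_iff.2 hqM)))
  have hfib : ∀ i, f i xb ≤ 0 := by
    intro i
    apply le_zero_of_conj_bound (hf i)
    intro q
    by_cases htop : conjFn (f i) q = ⊤
    · rw [htop]; exact le_top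
    · have hnbot : conjFn (f i) q ≠ ⊥ := by
        obtain ⟨hbot, ⟨x0, hx0⟩, -, -⟩ := hf i
        have hfx : f i x0 = (((f i x0).toReal : ℝ) : EReal) :=
          (EReal.coe_toReal hx0 (hbot x0)).symm
        have h1 := le_conjFn (h := f i) q x0
        rw [hfx, ← EReal.coe_sub] at h1
        intro hb
        rw [hb, le_bot_iff] at h1
        exact (EReal.coe_ne_bot _) h1
      have hm : conjFn (f i) q = (((conjFn (f i) q).toReal : ℝ) : EReal) :=
        (EReal.coe_toReal htop hnbot).symm
      have hepi : (q, (conjFn (f i) q).toReal) ∈ epiFn (conjFn (f i)) := le_of_eq hm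
      have h5 := hkey q _ (epiF_subset_charCone i hepi)
      rw [hm]
      exact EReal.coe_le_coe_iff.2 h5
  have hmem : xb ∈ solSet C f := ⟨hxbC, hfib⟩
  rw [hsol] at hmem
  exact hmem

end CharCone

section Assemble

variable {I : Type*} {C : Set X} {f : I → X → EReal}

lemma clW_smul {D : Set (WeakDual ℝ X)} {t : ℝ} (ht : 0 ≤ t) {p : WeakDual ℝ X}
    (hp : p ∈ closure (coneGen D)) : t • p ∈ closure (coneGen D) :=
  map_mem_closure (cont_smul_W t) hp (fun _ hw => smul_mem_coneGen ht hw)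

lemma line_mem_clK (hfar : ((0 : WeakDual ℝ X), (-1 : ℝ)) ∈ closure (charCone C f))
    {p : WeakDual ℝ X} {r : ℝ}
    (hp : (p, r) ∈ (epiFn (conjFn (indicatorE C)) ∪ ⋃ i, epiFn (conjFn (f i)))) :
    ∀ s : ℝ, (p, s) ∈ closure (charCone C f) := by
  intro s
  have hpr' : (p, max r s) ∈ (epiFn (conjFn (indicatorE C)) ∪ ⋃ i, epiFn (conjFn (f i))) := by
    rcases hp with hp | hp
    · exact Or.inl (epi_upward (le_max_left r s) hp)
    · obtain ⟨i, hpi⟩ := Set.mem_iUnion.1 hp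
      exact Or.inr (Set.mem_iUnion.2 ⟨i, epi_upward (le_max_left r s) hpi⟩)
  have h1 : (p, max r s) ∈ charCone C f := mem_coneGen_of_mem hpr'
  have h2 : (max r s - s) • (((0 : WeakDual ℝ X), (-1 : ℝ))) ∈ closure (charCone C f) :=
    clK_smul (by simp [le_max_right r s]) hfar
  have h3 := clK_add (subset_closure h1) h2
  have h4 : (p, max r s) + (max r s - s) • (((0 : WeakDual ℝ X), (-1 : ℝ))) = (p, s) := by
    rw [Prod.ext_iff]
    constructor
    · show p + (max r s - s) • (0 : WeakDual ℝ X) = p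
      rw [smul_zero, add_zero]
    · show max r s + (max r s - s) * (-1) = s
      ring
  rwa [h4] at h3

lemma T_lemma (hfar : ((0 : WeakDual ℝ X), (-1 : ℝ)) ∈ closure (charCone C f)) :
    coneGen ((⋃ i, domFn (conjFn (f i))) ∪ barCone C) ⊆
      {p : WeakDual ℝ X | ∀ s : ℝ, (p, s) ∈ closure (charCone C f)} := by
  apply coneGen_subset
  · intro s
    apply line_mem_clK hfar (r := 0)
    · exact Or.inl (mem_epi_indicator_iff.2 (fun x _ => by simp))
  · intro p hp q hq a b ha hb hab s
    have h1 := (convex_coneGen _).closure (hp s) (hq s) ha hb hab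
    have h2 : a • ((p, s) : WeakDual ℝ X × ℝ) + b • ((q, s) : WeakDual ℝ X × ℝ)
        = (a • p + b • q, s) := by
      rw [Prod.ext_iff]
      refine ⟨rfl, ?_⟩
      show a * s + b * s = s
      rw [← add_mul, hab, one_mul]
    rwa [h2] at h1
  · intro t ht p hp s
    rcases eq_or_lt_of_le ht with rfl | htpos
    · have h0 : ((0 : WeakDual ℝ X), s) ∈ closure (charCone C f) :=
        line_mem_clK hfar (r := 0) (Or.inl (mem_epi_indicator_iff.2 (fun x _ => by simp))) s
      rw [zero_smul]
      exact h0
    · have h1 := hp (s / t)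
      have h2 := clK_smul (le_of_lt htpos) h1
      have h3 : t • ((p, s / t) : WeakDual ℝ X × ℝ) = (t • p, s) := by
        rw [Prod.ext_iff]
        refine ⟨rfl, ?_⟩
        show t * (s / t) = s
        rw [mul_div_cancel₀ _ (ne_of_gt htpos)]
      rwa [h3] at h2
  · rintro p (hp | hp)
    · obtain ⟨i, hpi⟩ := Set.mem_iUnion.1 hp
      obtain ⟨r, hr⟩ := exists_epi_of_mem_dom hpi
      exact line_mem_clK hfar (Or.inr (Set.mem_iUnion.2 ⟨i, hr⟩))
    · obtain ⟨r, hr⟩ := exists_epi_of_mem_dom hp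
      exact line_mem_clK hfar (Or.inl hr)

end Assemble

section Assemble2

variable {I : Type*} {C : Set X} {f : I → X → EReal}

lemma clK_sub {S : Set (WeakDual ℝ X)} (hS0 : (0 : WeakDual ℝ X) ∈ S) (hScv : Convex ℝ S)
    (hSsm : ∀ t : ℝ, 0 ≤ t → ∀ p ∈ S, t • p ∈ S)
    (hΩ : (⋃ i, domFn (conjFn (f i))) ⊆ S) (hB : barCone C ⊆ S) :
    closure (charCone C f) ⊆ (closure S) ×ˢ (Set.univ : Set ℝ) := by
  have h1 : charCone C f ⊆ S ×ˢ (Set.univ : Set ℝ) := by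
    apply coneGen_subset
    · exact ⟨hS0, trivial⟩
    · exact hScv.prod (convex_univ)
    · rintro t ht ⟨p, r⟩ ⟨hp, -⟩
      exact ⟨hSsm t ht p hp, trivial⟩
    · rintro ⟨p, r⟩ (hz | hz)
      · exact ⟨hB (mem_dom_of_epi hz), trivial⟩
      · obtain ⟨i, hzi⟩ := Set.mem_iUnion.1 hz
        exact ⟨hΩ (Set.mem_iUnion.2 ⟨i, mem_dom_of_epi hzi⟩), trivial⟩
  calc closure (charCone C f) ⊆ closure (S ×ˢ (Set.univ : Set ℝ)) := closure_mono h1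
    _ = closure S ×ˢ closure (Set.univ : Set ℝ) := closure_prod_eq
    _ = closure S ×ˢ (Set.univ : Set ℝ) := by rw [closure_univ]

lemma sub_clK {S : Set (WeakDual ℝ X)}
    (hS : S ⊆ {p : WeakDual ℝ X | ∀ s : ℝ, (p, s) ∈ closure (charCone C f)}) :
    (closure S) ×ˢ (Set.univ : Set ℝ) ⊆ closure (charCone C f) := by
  have h1 : S ×ˢ (Set.univ : Set ℝ) ⊆ closure (charCone C f) := by
    rintro ⟨p, s⟩ ⟨hp, -⟩
    exact hS hp s
  calc (closure S) ×ˢ (Set.univ : Set ℝ) = closure (S ×ˢ (Set.univ : Set ℝ)) := by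
        rw [closure_prod_eq, closure_univ]
    _ ⊆ closure (closure (charCone C f)) := closure_mono h1
    _ = closure (charCone C f) := closure_closure

lemma not_consistent_of_eq {S : Set (WeakDual ℝ X)} (h0 : (0 : WeakDual ℝ X) ∈ S)
    (heq : closure (charCone C f) = closure S ×ˢ (Set.univ : Set ℝ)) : solSet C f = ∅ := by
  rw [Set.eq_empty_iff_forall_notMem]
  intro a ha
  have hH : closure (charCone C f) ⊆ {z : WeakDual ℝ X × ℝ | z.1 a ≤ z.2} := by
    apply closure_minimal
    · apply coneGen_subset
      · show (0 : WeakDual ℝ X) a ≤ (0:ℝ)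
        simp
      · rintro ⟨p, r⟩ hp ⟨q, s⟩ hq α β hα hβ hab
        show (α • p + β • q) a ≤ α * r + β * s
        rw [wd_add_apply, wd_smul_apply, wd_smul_apply]
        have h1 : p a ≤ r := hp
        have h2 : q a ≤ s := hq
        have := mul_le_mul_of_nonneg_left h1 hα
        have := mul_le_mul_of_nonneg_left h2 hβ
        linarith
      · rintro t ht ⟨p, r⟩ hp
        show (t • p) a ≤ t * r
        rw [wd_smul_apply]
        exact mul_le_mul_of_nonneg_left hp ht
      · rintro ⟨p, r⟩ (hz | hz)
        · exact mem_epi_indicator_iff.1 hz a ha.1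
        · obtain ⟨i, hzi⟩ := Set.mem_iUnion.1 hz
          have h1 := mem_epi_conj_iff.1 hzi a
          have h2 : (0 : EReal) ≤ -(f i a) := by
            rw [show (0:EReal) = -0 from neg_zero.symm]
            exact EReal.neg_le_neg_iff.2 (ha.2 i)
          have h3 : (p a : EReal) ≤ (p a : EReal) - f i a := by
            rw [sub_eq_add_neg]
            exact le_add_of_nonneg_right h2
          have h4 := le_trans h3 h1
          rw [EReal.coe_le_coe_iff] at h4
          exact h4
    · exact isClosed_le ((WeakDual.eval_continuous a).comp continuous_fst) continuous_snd
  have hm : ((0 : WeakDual ℝ X), (-1:ℝ)) ∈ closure S ×ˢ (Set.univ : Set ℝ) :=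
    ⟨subset_closure h0, trivial⟩
  rw [← heq] at hm
  have hcon := hH hm
  have : (0 : WeakDual ℝ X) a ≤ (-1 : ℝ) := hcon
  rw [wd_zero_apply] at this
  linarith

end Assemble2

/-- Proposition 1 (The closure of the characteristic cone of inconsistent systems). -/
theorem stmt15 [IsTopologicalAddGroup X] [ContinuousSMul ℝ X] [LocallyConvexSpace ℝ X] [T2Space X] {I : Type*} (C : Set X) (hCne : C.Nonempty) (hCcl : IsClosed C) (hCcv : Convex ℝ C)
    (f : I → X → EReal) (hf : ∀ i, InGamma (f i)) :
    [ solSet C f = ∅,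
      closure (charCone C f) =
        (closure (coneGen (⋃ i, domFn (conjFn (f i))) + barCone C)) ×ˢ (Set.univ : Set ℝ),
      closure (charCone C f) =
        (closure (coneGen ((⋃ i, domFn (conjFn (f i))) ∪ barCone C))) ×ˢ (Set.univ : Set ℝ),
      closure (charCone C f) =
        (closure (coneGen ((⋃ i, domFn (conjFn (f i))) + barCone C))) ×ˢ (Set.univ : Set ℝ) ].TFAE := by
  set Ω : Set (WeakDual ℝ X) := ⋃ i, domFn (conjFn (f i)) with hΩdef
  set B : Set (WeakDual ℝ X) := barCone C with hBdef
  have hΩS1 : Ω ⊆ coneGen (Ω ∪ B) := fun p hp => mem_coneGen_of_mem (Or.inl hp)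
  have hBS1 : B ⊆ coneGen (Ω ∪ B) := fun p hp => mem_coneGen_of_mem (Or.inr hp)
  have hS2zero : (0 : WeakDual ℝ X) ∈ coneGen Ω + B := by
    simpa using Set.add_mem_add (zero_mem_coneGen Ω) (zero_mem_barCone C)
  tfae_have 1 → 2 := by
    intro h1
    have hfar := farkas hCcl hCcv hf h1
    have hS1T := T_lemma hfar
    refine Set.Subset.antisymm ?_ ?_
    · refine clK_sub hS2zero ((convex_coneGen Ω).add (convex_barCone C)) ?_ ?_ ?_
      · rintro t ht p hp
        obtain ⟨w, hw, b, hb, rfl⟩ := Set.mem_add.1 hp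
        rw [smul_add]
        exact Set.add_mem_add (smul_mem_coneGen ht hw) (smul_mem_barCone ht hb)
      · intro p hp
        simpa using Set.add_mem_add (mem_coneGen_of_mem hp) (zero_mem_barCone C)
      · intro b hb
        simpa using Set.add_mem_add (zero_mem_coneGen Ω) hb
    · refine sub_clK ?_
      rintro p hp
      obtain ⟨w, hw, b, hb, rfl⟩ := Set.mem_add.1 hp
      exact hS1T (add_mem_coneGen (coneGen_mono Set.subset_union_left hw)
        (mem_coneGen_of_mem (Or.inr hb)))
  tfae_have 1 → 3 := by
    intro h1
    have hfar := farkas hCcl hCcv hf h1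
    refine Set.Subset.antisymm ?_ (sub_clK (T_lemma hfar))
    exact clK_sub (zero_mem_coneGen _) (convex_coneGen _)
      (fun t ht p hp => smul_mem_coneGen ht hp) hΩS1 hBS1
  tfae_have 1 → 4 := by
    intro h1
    have hfar := farkas hCcl hCcv hf h1
    have hS1T := T_lemma hfar
    have hI : Nonempty I := by
      by_contra hI
      rw [not_nonempty_iff] at hI
      obtain ⟨x0, hx0⟩ := hCne
      have hmem : x0 ∈ solSet C f := ⟨hx0, fun i => (hI.false i).elim⟩
      rw [h1] at hmem
      exact hmem
    obtain ⟨i0⟩ := hI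
    obtain ⟨q0, M0, hq0⟩ := exists_dom_conj (hf i0)
    have hω0 : q0 ∈ Ω := Set.mem_iUnion.2 ⟨i0, lt_of_le_of_lt hq0 (EReal.coe_lt_top M0)⟩
    have hΩS3 : Ω ⊆ coneGen (Ω + B) := fun p hp =>
      mem_coneGen_of_mem (by simpa using Set.add_mem_add hp (zero_mem_barCone C))
    have hBclS3 : B ⊆ closure (coneGen (Ω + B)) := by
      intro b hb
      have hg : Continuous fun t : ℝ => (t • q0 + b : WeakDual ℝ X) := by
        apply WeakDual.continuous_of_continuous_eval
        intro y
        have hfe : (fun t : ℝ => (t • q0 + b) y) = fun t : ℝ => t * q0 y + b y := by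
          funext t; rw [wd_add_apply, wd_smul_apply]
        rw [hfe]
        exact (continuous_id.mul continuous_const).add continuous_const
      have htend : Filter.Tendsto (fun t : ℝ => (t • q0 + b : WeakDual ℝ X))
          (nhdsWithin 0 (Set.Ioi 0)) (nhds b) := by
        have h2 := hg.tendsto 0
        rw [zero_smul, zero_add] at h2
        exact h2.mono_left nhdsWithin_le_nhds
      apply mem_closure_of_tendsto htend
      filter_upwards [self_mem_nhdsWithin] with t ht
      have htpos : (0:ℝ) < t := ht
      have hx : q0 + t⁻¹ • b ∈ Ω + B :=
        Set.add_mem_add hω0 (smul_mem_barCone (le_of_lt (inv_pos.2 htpos)) hb)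
      refine Or.inr ⟨t, le_of_lt htpos, q0 + t⁻¹ • b, subset_convexHull ℝ _ hx, ?_⟩
      rw [smul_add, smul_smul, mul_inv_cancel₀ (ne_of_gt htpos), one_smul]
    have hfwd := clK_sub (C := C) (f := f) (S := closure (coneGen (Ω + B)))
      (subset_closure (zero_mem_coneGen _)) ((convex_coneGen _).closure)
      (fun t ht p hp => clW_smul ht hp) (fun p hp => subset_closure (hΩS3 hp)) hBclS3
    rw [closure_closure] at hfwd
    refine Set.Subset.antisymm hfwd ?_
    refine sub_clK ?_
    intro p hp
    apply hS1T
    refine coneGen_subset (zero_mem_coneGen _) (convex_coneGen _)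
      (fun t ht w hw => smul_mem_coneGen ht hw) ?_ hp
    rintro w hw
    obtain ⟨w1, hw1, b1, hb1, rfl⟩ := Set.mem_add.1 hw
    exact add_mem_coneGen (mem_coneGen_of_mem (Or.inl hw1)) (mem_coneGen_of_mem (Or.inr hb1))
  tfae_have 2 → 1 := fun h2 => not_consistent_of_eq hS2zero h2
  tfae_have 3 → 1 := fun h3 => not_consistent_of_eq (zero_mem_coneGen _) h3
  tfae_have 4 → 1 := fun h4 => not_consistent_of_eq (zero_mem_coneGen _) h4
  tfae_finish
end
end
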